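/- Let ℏ > 0 and let z be a complex number with |Im z| < π(1+ℏ). Then the quantum dilogarithm satisfies conj(Φ^ℏ(z)) = Φ^ℏ(conj(z))^{−1}. In particular, |Φ^ℏ(x)| = 1 for every real x. -/

import Mathlib

noncomputable section

open Complex

/-- The shifted contour point `t + iδ(ℏ)`, where `δ(ℏ) := min(1, 1/ℏ)/2`
satisfies `0 < δ < min(1, 1/ℏ)` for `ℏ > 0`. -/
def qContour (ℏ t : ℝ) : ℂ := (t : ℂ) + Complex.I * ((min 1 ℏ⁻¹ / 2 : ℝ) : ℂ)

/-- The quantum logarithm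
`φ^ℏ(z) = −2πℏ ∫_ℝ e^{−i(t+iδ)z} / ((e^{π(t+iδ)} − e^{−π(t+iδ)})(e^{πℏ(t+iδ)} − e^{−πℏ(t+iδ)})) dt`. -/
def qlog (ℏ : ℝ) (z : ℂ) : ℂ :=
  (-(2 * Real.pi * ℏ) : ℝ) *
    ∫ t : ℝ,
      Complex.exp (-Complex.I * qContour ℏ t * z) /
        ((Complex.exp ((Real.pi : ℂ) * qContour ℏ t)
            - Complex.exp (-((Real.pi : ℂ) * qContour ℏ t))) *
         (Complex.exp ((Real.pi : ℂ) * (ℏ : ℂ) * qContour ℏ t)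
            - Complex.exp (-((Real.pi : ℂ) * (ℏ : ℂ) * qContour ℏ t))))

/-- The quantum dilogarithm
`Φ^ℏ(z) = exp(−(1/4) ∫_ℝ e^{−i(t+iδ)z} / (sinh(π(t+iδ))·sinh(πℏ(t+iδ))·(t+iδ)) dt)`. -/
def qdilog (ℏ : ℝ) (z : ℂ) : ℂ :=
  Complex.exp (-(1 / 4 : ℂ) *
    ∫ t : ℝ,
      Complex.exp (-Complex.I * qContour ℏ t * z) /
        (Complex.sinh ((Real.pi : ℂ) * qContour ℏ t) *
         Complex.sinh ((Real.pi : ℂ) * (ℏ : ℂ) * qContour ℏ t) * qContour ℏ t))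



open MeasureTheory in
lemma qContour_conj (ℏ t : ℝ) : (starRingEnd ℂ) (qContour ℏ t) = - qContour ℏ (-t) := by
  simp [qContour, Complex.conj_I, map_ofNat]
  ring

lemma integrand_conj (ℏ t : ℝ) (z : ℂ) :
    (starRingEnd ℂ) (Complex.exp (-Complex.I * qContour ℏ t * z) /
        (Complex.sinh ((Real.pi : ℂ) * qContour ℏ t) *
         Complex.sinh ((Real.pi : ℂ) * (ℏ : ℂ) * qContour ℏ t) * qContour ℏ t)) =
    - (Complex.exp (-Complex.I * qContour ℏ (-t) * ((starRingEnd ℂ) z)) /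
        (Complex.sinh ((Real.pi : ℂ) * qContour ℏ (-t)) *
         Complex.sinh ((Real.pi : ℂ) * (ℏ : ℂ) * qContour ℏ (-t)) * qContour ℏ (-t))) := by
  rw [map_div₀, map_mul, map_mul, ← Complex.exp_conj, ← Complex.sinh_conj, ← Complex.sinh_conj]
  simp only [map_mul, map_neg, Complex.conj_I, qContour_conj, Complex.conj_ofReal]
  rw [show -(-Complex.I) * -qContour ℏ (-t) * (starRingEnd ℂ) z
      = -Complex.I * qContour ℏ (-t) * (starRingEnd ℂ) z by ring,
    show (Real.pi : ℂ) * -qContour ℏ (-t) = -((Real.pi : ℂ) * qContour ℏ (-t)) by ring,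
    show (Real.pi : ℂ) * (ℏ:ℂ) * -qContour ℏ (-t) = -((Real.pi : ℂ) * (ℏ:ℂ) * qContour ℏ (-t)) by ring,
    Complex.sinh_neg, Complex.sinh_neg]
  rw [show -Complex.sinh ((Real.pi:ℂ) * qContour ℏ (-t)) *
        -Complex.sinh ((Real.pi:ℂ) * (ℏ:ℂ) * qContour ℏ (-t)) * -qContour ℏ (-t)
      = -(Complex.sinh ((Real.pi:ℂ) * qContour ℏ (-t)) *
        Complex.sinh ((Real.pi:ℂ) * (ℏ:ℂ) * qContour ℏ (-t)) * qContour ℏ (-t)) by ring,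
    div_neg]

open MeasureTheory in
lemma qdilog_conj (ℏ : ℝ) (z : ℂ) :
    (starRingEnd ℂ) (qdilog ℏ z) = (qdilog ℏ ((starRingEnd ℂ) z))⁻¹ := by
  unfold qdilog
  rw [← Complex.exp_conj, ← Complex.exp_neg]
  congr 1
  rw [map_mul, ← integral_conj]
  have h1 : (starRingEnd ℂ) (-(1/4 : ℂ)) = -(1/4 : ℂ) := by
    rw [show (-(1/4:ℂ)) = ((-(1/4):ℝ):ℂ) by norm_num, Complex.conj_ofReal]
  rw [h1]
  have h2 : (∫ t : ℝ, (starRingEnd ℂ)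
      (Complex.exp (-Complex.I * qContour ℏ t * z) /
        (Complex.sinh ((Real.pi : ℂ) * qContour ℏ t) *
         Complex.sinh ((Real.pi : ℂ) * (ℏ : ℂ) * qContour ℏ t) * qContour ℏ t)))
      = - ∫ t : ℝ,
      Complex.exp (-Complex.I * qContour ℏ t * ((starRingEnd ℂ) z)) /
        (Complex.sinh ((Real.pi : ℂ) * qContour ℏ t) *
         Complex.sinh ((Real.pi : ℂ) * (ℏ : ℂ) * qContour ℏ t) * qContour ℏ t) := by
    rw [← MeasureTheory.integral_neg]
    rw [← MeasureTheory.integral_neg_eq_self (fun t : ℝ => -(Complex.exp (-Complex.I * qContour ℏ t * ((starRingEnd ℂ) z)) /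
        (Complex.sinh ((Real.pi : ℂ) * qContour ℏ t) *
         Complex.sinh ((Real.pi : ℂ) * (ℏ : ℂ) * qContour ℏ t) * qContour ℏ t)))]
    exact integral_congr_ae (Filter.Eventually.of_forall fun t => by
      simpa using integrand_conj ℏ t z)
  rw [h2]
  ring

theorem stmt16 (ℏ : ℝ) (hℏ : 0 < ℏ) :
    (∀ z : ℂ, |z.im| < Real.pi * (1 + ℏ) →
      (starRingEnd ℂ) (qdilog ℏ z) = (qdilog ℏ ((starRingEnd ℂ) z))⁻¹) ∧
    (∀ x : ℝ, ‖qdilog ℏ (x : ℂ)‖ = 1) := by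
  refine ⟨fun z _ => qdilog_conj ℏ z, fun x => ?_⟩
  have h := qdilog_conj ℏ (x : ℂ)
  rw [Complex.conj_ofReal] at h
  have hne : qdilog ℏ (x : ℂ) ≠ 0 := Complex.exp_ne_zero _
  have hm : qdilog ℏ (x : ℂ) * (starRingEnd ℂ) (qdilog ℏ (x : ℂ)) = 1 := by
    rw [h, mul_inv_cancel₀ hne]
  rw [Complex.mul_conj] at hm
  have h2 : ‖qdilog ℏ (x : ℂ)‖ ^ 2 = 1 := by
    rw [Complex.sq_norm]
    exact_mod_cast hm
  nlinarith [norm_nonneg (qdilog ℏ (x : ℂ)), h2]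


end
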